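/- Let G = (X, W) be a monotone simple game on a finite set X with |X| = n. Then Q*₀(G) := (1/(n+1)) Σ_{k=0}^{n} |W_k| / C(n,k) = 1 − Q̄(G)/(n+1), where Q̄(G) is the average over all n! bijections σ : {1,…,n} → X of the quantity Q_σ(G), defined as the least k such that {σ(1),…,σ(k)} is a winning coalition (and n+1 if no such k exists). -/

import Mathlib

/-- The set of the first `k` players queried, according to the ordering `σ`. -/
def initSeg {n : ℕ} {X : Type*} [DecidableEq X] (σ : Fin n ≃ X) (k : ℕ) : Finset X :=
  (Finset.univ.filter fun j : Fin n => (j : ℕ) < k).image σ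

open Classical in
/-- The number of queries needed to find a winning coalition under the ordering `σ`:
the least `k` such that the first `k` players queried form a winning coalition, and
`n + 1` if no such `k` exists. -/
noncomputable def Qval {n : ℕ} {X : Type*} [DecidableEq X] (W : Finset (Finset X))
    (σ : Fin n ≃ X) : ℕ :=
  if h : ∃ k, initSeg σ k ∈ W then Nat.find h else n + 1

lemma initSeg_mono {n : ℕ} {X : Type*} [DecidableEq X] (σ : Fin n ≃ X) {k l : ℕ} (h : k ≤ l) :
    initSeg σ k ⊆ initSeg σ l :=
  Finset.image_subset_image (by
    intro j hj
    simp only [Finset.mem_filter, Finset.mem_univ, true_and] at hj ⊢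
    exact lt_of_lt_of_le hj h)

lemma initSeg_card {n : ℕ} {X : Type*} [DecidableEq X] (σ : Fin n ≃ X) {k : ℕ} (hk : k ≤ n) :
    (initSeg σ k).card = k := by
  rw [initSeg, Finset.card_image_of_injective _ σ.injective]
  have : (Finset.univ.filter fun j : Fin n => (j : ℕ) < k) =
      (Finset.range k).attachFin (fun m hm => lt_of_lt_of_le (Finset.mem_range.mp hm) hk) := by
    ext j
    simp [Finset.mem_attachFin]
  rw [this, Finset.card_attachFin, Finset.card_range]

lemma initSeg_top {n : ℕ} {X : Type*} [Fintype X] [DecidableEq X] (σ : Fin n ≃ X) :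
    initSeg σ n = Finset.univ := by
  rw [initSeg]
  have : (Finset.univ.filter fun j : Fin n => (j : ℕ) < n) = Finset.univ := by
    ext j; simp [j.isLt]
  rw [this]
  exact Finset.image_univ_equiv σ

open Classical in
lemma Qval_eq_card {n : ℕ} {X : Type*} [Fintype X] [DecidableEq X] (W : Finset (Finset X))
    (hmono : ∀ A B : Finset X, A ∈ W → A ⊆ B → B ∈ W) (σ : Fin n ≃ X) :
    Qval W σ = ((Finset.range (n + 1)).filter fun k => initSeg σ k ∉ W).card := by
  rw [Qval]
  split_ifs with h
  · set m := Nat.find h with hm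
    have hmW : initSeg σ m ∈ W := Nat.find_spec h
    have hmn : m ≤ n := by
      obtain ⟨k, hk⟩ := h
      have huniv : Finset.univ ∈ W := hmono _ _ hk (Finset.subset_univ _)
      have : initSeg σ n ∈ W := by rw [initSeg_top]; exact huniv
      exact Nat.find_le this
    have : ((Finset.range (n + 1)).filter fun k => initSeg σ k ∉ W) = Finset.range m := by
      ext j
      simp only [Finset.mem_filter, Finset.mem_range]
      constructor
      · rintro ⟨hj, hjW⟩
        by_contra hc
        exact hjW (hmono _ _ hmW (initSeg_mono σ (le_of_not_gt hc)))
      · intro hj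
        exact ⟨lt_of_lt_of_le hj (Nat.lt_succ_of_le hmn).le, Nat.find_min h hj⟩
    rw [this, Finset.card_range]
  · push_neg at h
    rw [Finset.filter_true_of_mem fun k _ => h k, Finset.card_range]

lemma initSeg_trans {n : ℕ} {X : Type*} [DecidableEq X] (σ : Fin n ≃ X) (g : X ≃ X) (k : ℕ) :
    initSeg (σ.trans g) k = (initSeg σ k).image g := by
  rw [initSeg, initSeg, Finset.image_image]
  rfl

open Classical in
lemma exists_perm_image {X : Type*} [Fintype X] [DecidableEq X] {S T : Finset X}
    (h : S.card = T.card) : ∃ g : X ≃ X, S.image g = T := by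
  have hc : Fintype.card {x // x ∉ S} = Fintype.card {x // x ∉ T} := by
    have h1 : Fintype.card {x // x ∉ S} = Fintype.card X - S.card := by
      rw [← Finset.card_compl]
      exact (Fintype.card_coe Sᶜ ▸ Fintype.card_congr
        (Equiv.subtypeEquivRight (fun x => Finset.mem_compl))).symm ▸ rfl
    have h2 : Fintype.card {x // x ∉ T} = Fintype.card X - T.card := by
      rw [← Finset.card_compl]
      exact (Fintype.card_coe Tᶜ ▸ Fintype.card_congr
        (Equiv.subtypeEquivRight (fun x => Finset.mem_compl))).symm ▸ rfl
    rw [h1, h2, h]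
  let e : {x // x ∈ S} ≃ {x // x ∈ T} := Finset.equivOfCardEq h
  let f : {x // x ∉ S} ≃ {x // x ∉ T} := Fintype.equivOfCardEq hc
  refine ⟨Equiv.subtypeCongr e f, ?_⟩
  have hsub : S.image (Equiv.subtypeCongr e f) ⊆ T := by
    intro y hy
    obtain ⟨x, hx, rfl⟩ := Finset.mem_image.mp hy
    have : Equiv.subtypeCongr e f x = (e ⟨x, hx⟩ : X) := by
      simp [Equiv.subtypeCongr, hx]
    rw [this]
    exact (e ⟨x, hx⟩).2
  apply Finset.eq_of_subset_of_card_le hsub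
  rw [Finset.card_image_of_injective _ (Equiv.subtypeCongr e f).injective, h]

open Classical in
lemma fiber_card_eq {n : ℕ} {X : Type*} [Fintype X] [DecidableEq X] {k : ℕ} {S T : Finset X}
    (h : S.card = T.card) :
    (Finset.univ.filter fun σ : Fin n ≃ X => initSeg σ k = S).card =
    (Finset.univ.filter fun σ : Fin n ≃ X => initSeg σ k = T).card := by
  obtain ⟨g, hg⟩ := exists_perm_image h
  apply Finset.card_bij' (fun σ _ => σ.trans g) (fun σ _ => σ.trans g.symm)
  · intro σ _
    ext j
    simp
  · intro σ _
    ext j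
    simp
  · intro σ hσ
    simp only [Finset.mem_filter, Finset.mem_univ, true_and] at hσ ⊢
    rw [initSeg_trans, hσ, hg]
  · intro σ hσ
    simp only [Finset.mem_filter, Finset.mem_univ, true_and] at hσ ⊢
    rw [initSeg_trans, hσ, ← hg, Finset.image_image]
    simp

open Classical in
lemma count_winning {X : Type*} [Fintype X] [DecidableEq X] {n k : ℕ} (hn : Fintype.card X = n)
    (hk : k ≤ n) (W : Finset (Finset X)) :
    ((Finset.univ.filter fun σ : Fin n ≃ X => initSeg σ k ∈ W).card : ℝ) / (n.factorial : ℝ)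
      = ((W.filter fun S => S.card = k).card : ℝ) / (n.choose k : ℝ) := by
  obtain ⟨S₀, -, hS₀⟩ := Finset.exists_subset_card_eq
    (show k ≤ (Finset.univ : Finset X).card by rw [Finset.card_univ, hn]; exact hk)
  set c := (Finset.univ.filter fun σ : Fin n ≃ X => initSeg σ k = S₀).card with hc
  have hfib : ∀ S : Finset X, S.card = k →
      (Finset.univ.filter fun σ : Fin n ≃ X => initSeg σ k = S).card = c := by
    intro S hS
    exact fiber_card_eq (by rw [hS, hS₀])
  have h1 : n.factorial = n.choose k * c := by
    have e : Fin n ≃ X := Fintype.equivOfCardEq (by simp [hn])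
    have hcard : (Finset.univ : Finset (Fin n ≃ X)).card = n.factorial := by
      rw [Finset.card_univ, Fintype.card_equiv e, Fintype.card_fin]
    rw [← hcard]
    rw [Finset.card_eq_sum_card_fiberwise
      (f := fun σ : Fin n ≃ X => initSeg σ k) (t := Finset.univ.powersetCard k)
      (fun σ _ => Finset.mem_powersetCard.mpr ⟨Finset.subset_univ _, initSeg_card σ hk⟩)]
    rw [Finset.sum_congr rfl (fun S hS => hfib S (Finset.mem_powersetCard.mp hS).2)]
    rw [Finset.sum_const, smul_eq_mul, Finset.card_powersetCard, Finset.card_univ, hn]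
  have h2 : (Finset.univ.filter fun σ : Fin n ≃ X => initSeg σ k ∈ W).card
      = (W.filter fun S => S.card = k).card * c := by
    rw [Finset.card_eq_sum_card_fiberwise
      (f := fun σ : Fin n ≃ X => initSeg σ k) (t := W.filter fun S => S.card = k)
      (fun σ hσ => by
        simp only [Finset.mem_filter, Finset.mem_univ, true_and] at hσ ⊢
        exact Finset.mem_filter.mpr ⟨(Finset.mem_filter.mp hσ).2, initSeg_card σ hk⟩)]
    have hsum : ∀ S ∈ W.filter fun S => S.card = k,
        ((Finset.univ.filter fun σ : Fin n ≃ X => initSeg σ k ∈ W).filter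
          fun σ => initSeg σ k = S).card = c := by
      intro S hS
      have hSW : S ∈ W := (Finset.mem_filter.mp hS).1
      have hSk : S.card = k := (Finset.mem_filter.mp hS).2
      rw [Finset.filter_filter]
      rw [show (Finset.univ.filter fun σ : Fin n ≃ X => initSeg σ k ∈ W ∧ initSeg σ k = S)
          = Finset.univ.filter fun σ : Fin n ≃ X => initSeg σ k = S by
        ext σ
        simp only [Finset.mem_filter, Finset.mem_univ, true_and]
        exact ⟨fun h => h.2, fun h => ⟨h ▸ hSW, h⟩⟩]
      exact hfib S hSk
    rw [Finset.sum_congr rfl hsum, Finset.sum_const, smul_eq_mul]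
  have hchoose : (0 : ℝ) < (n.choose k : ℝ) := by
    exact_mod_cast Nat.choose_pos hk
  have hcne : (c : ℝ) ≠ 0 := by
    intro h0
    have : (n.factorial : ℝ) = 0 := by
      rw [h1]; push_cast; rw [h0]; ring
    exact_mod_cast Nat.factorial_ne_zero n (by exact_mod_cast this)
  rw [h2, h1]
  push_cast
  rw [mul_div_mul_right _ _ hcne]

/-- For a monotone simple game `(X, W)` with `|X| = n`,
`Q*₀(G) = (1/(n+1)) ∑_{k=0}^{n} |W_k| / C(n,k) = 1 − Q̄(G)/(n+1)`, where `Q̄(G)` is the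
average of `Q_σ(G)` over all `n!` bijections `σ : Fin n ≃ X`. -/
theorem statement19 {X : Type*} [Fintype X] [DecidableEq X] (n : ℕ)
    (hn : Fintype.card X = n) (W : Finset (Finset X)) (hW : ∅ ∉ W)
    (hmono : ∀ A B : Finset X, A ∈ W → A ⊆ B → B ∈ W) :
    (1 / ((n : ℝ) + 1)) * ∑ k ∈ Finset.range (n + 1),
        ((W.filter fun S => S.card = k).card : ℝ) / (n.choose k : ℝ)
      = 1 - ((∑ σ : Fin n ≃ X, (Qval W σ : ℝ)) / (n.factorial : ℝ)) / ((n : ℝ) + 1) := by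
  classical
  have hfact : ((n.factorial : ℝ)) ≠ 0 := by
    exact_mod_cast Nat.factorial_ne_zero n
  have hn1 : ((n : ℝ) + 1) ≠ 0 := by positivity
  -- cardinality of the universe of bijections
  have e : Fin n ≃ X := Fintype.equivOfCardEq (by simp [hn])
  have hcardU : (Finset.univ : Finset (Fin n ≃ X)).card = n.factorial := by
    rw [Finset.card_univ, Fintype.card_equiv e, Fintype.card_fin]
  -- rewrite Qval as a difference
  have hsplit : ∀ σ : Fin n ≃ X, (Qval W σ : ℝ)
      = ((n : ℝ) + 1) - (((Finset.range (n + 1)).filter fun k => initSeg σ k ∈ W).card : ℝ) := by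
    intro σ
    rw [Qval_eq_card W hmono σ]
    have h := Finset.card_filter_add_card_filter_not
      (s := Finset.range (n + 1)) (p := fun k => initSeg σ k ∈ W)
    rw [Finset.card_range] at h
    have h' : (((Finset.range (n + 1)).filter fun k => initSeg σ k ∈ W).card : ℝ)
        + (((Finset.range (n + 1)).filter fun k => ¬ initSeg σ k ∈ W).card : ℝ)
        = (n : ℝ) + 1 := by exact_mod_cast h
    linarith
  -- sum over σ
  have hsum : ∑ σ : Fin n ≃ X, (Qval W σ : ℝ)
      = (n.factorial : ℝ) * ((n : ℝ) + 1)
        - ∑ k ∈ Finset.range (n + 1),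
            ((Finset.univ.filter fun σ : Fin n ≃ X => initSeg σ k ∈ W).card : ℝ) := by
    rw [Finset.sum_congr rfl (fun σ _ => hsplit σ), Finset.sum_sub_distrib,
      Finset.sum_const, hcardU]
    congr 1
    · rw [nsmul_eq_mul]
    · have : ∀ σ : Fin n ≃ X,
          ((((Finset.range (n + 1)).filter fun k => initSeg σ k ∈ W).card : ℝ))
            = ∑ k ∈ Finset.range (n + 1), if initSeg σ k ∈ W then (1 : ℝ) else 0 := by
        intro σ
        rw [Finset.card_filter]
        push_cast
        rfl
      rw [Finset.sum_congr rfl (fun σ _ => this σ), Finset.sum_comm]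
      apply Finset.sum_congr rfl
      intro k _
      rw [Finset.card_filter]
      push_cast
      rfl
  -- the key identity for each k
  have hkey : ∑ k ∈ Finset.range (n + 1),
      ((Finset.univ.filter fun σ : Fin n ≃ X => initSeg σ k ∈ W).card : ℝ) / (n.factorial : ℝ)
      = ∑ k ∈ Finset.range (n + 1),
          ((W.filter fun S => S.card = k).card : ℝ) / (n.choose k : ℝ) := by
    apply Finset.sum_congr rfl
    intro k hk
    exact count_winning hn (Nat.lt_succ_iff.mp (Finset.mem_range.mp hk)) W
  rw [← hkey, hsum]
  rw [sub_div, sub_div, ← Finset.sum_div]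
  field_simp
  ring_nf
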